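/- Let V be a linear subspace of the space of n×n real symmetric matrices that is closed under Hadamard (entrywise) multiplication. Then V has a basis consisting of pairwise disjoint (0,1)-matrices, i.e., matrices F₀,...,F_d with entries in {0,1} satisfying F_i ∘ F_j = 0 for i ≠ j, where ∘ denotes Hadamard product. -/

import Mathlib

open Finset

/-- Step B: separation with a function vanishing at `t` and not at `s`. -/
lemma sep_lemma {S : Type*} (V : Submodule ℝ (S → ℝ))
    (hmul : ∀ f ∈ V, ∀ g ∈ V, f * g ∈ V) {s t : S}
    (w : S → ℝ) (hw : w ∈ V) (hws : w s ≠ 0)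
    (f : S → ℝ) (hf : f ∈ V) (hst : f s ≠ f t) :
    ∃ h ∈ V, h s ≠ 0 ∧ h t = 0 := by
  by_cases hfs : f s ≠ 0
  · refine ⟨f * f - f t • f, ?_, ?_, ?_⟩
    · exact V.sub_mem (hmul f hf f hf) (V.smul_mem _ hf)
    · simp only [Pi.sub_apply, Pi.mul_apply, Pi.smul_apply, smul_eq_mul]
      intro h
      apply hst
      have : f s * (f s - f t) = 0 := by ring_nf; ring_nf at h; linarith
      rcases mul_eq_zero.1 this with h1 | h1
      · exact absurd h1 hfs
      · linarith
    · simp only [Pi.sub_apply, Pi.mul_apply, Pi.smul_apply, smul_eq_mul]; ring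
  · push_neg at hfs
    have hft : f t ≠ 0 := by rw [hfs] at hst; exact fun h => hst h.symm
    by_cases hwt : w t ≠ w s
    · refine ⟨w * w - w t • w, ?_, ?_, ?_⟩
      · exact V.sub_mem (hmul w hw w hw) (V.smul_mem _ hw)
      · simp only [Pi.sub_apply, Pi.mul_apply, Pi.smul_apply, smul_eq_mul]
        intro h
        have : w s * (w s - w t) = 0 := by ring_nf; ring_nf at h; linarith
        rcases mul_eq_zero.1 this with h1 | h1
        · exact hws h1
        · exact hwt (by linarith)
      · simp only [Pi.sub_apply, Pi.mul_apply, Pi.smul_apply, smul_eq_mul]; ring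
    · push_neg at hwt
      refine ⟨w * w - (w s / f t) • (w * f), ?_, ?_, ?_⟩
      · exact V.sub_mem (hmul w hw w hw) (V.smul_mem _ (hmul w hw f hf))
      · simp only [Pi.sub_apply, Pi.mul_apply, Pi.smul_apply, smul_eq_mul, hfs]
        intro h
        apply hws
        nlinarith [sq_nonneg (w s)]
      · simp only [Pi.sub_apply, Pi.mul_apply, Pi.smul_apply, smul_eq_mul, hwt]
        field_simp
        ring
open scoped Classical in
/-- Indicator of a live class belongs to V. -/
lemma indicator_mem {S : Type*} [Fintype S] (V : Submodule ℝ (S → ℝ))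
    (hmul : ∀ f ∈ V, ∀ g ∈ V, f * g ∈ V) (s : S)
    (hlive : ∃ w ∈ V, w s ≠ 0) :
    (fun u => if (∀ f ∈ V, f s = f u) then (1:ℝ) else 0) ∈ V := by
  classical
  obtain ⟨w, hw, hws⟩ := hlive
  have Hsep : ∀ t : S, ¬ (∀ f ∈ V, f s = f t) → ∃ h ∈ V, h s ≠ 0 ∧ h t = 0 := by
    intro t ht
    push_neg at ht
    obtain ⟨f, hf, hfst⟩ := ht
    exact sep_lemma V hmul w hw hws f hf hfst
  choose! h hhV hhs hht using Hsep
  have prodmem : ∀ (T : Finset S), (∀ t ∈ T, ¬ (∀ f ∈ V, f s = f t)) →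
      w * ∏ t ∈ T, h t ∈ V := by
    intro T
    induction T using Finset.induction with
    | empty => intro _; simpa using hw
    | @insert a Tp hx ih =>
        intro hmem
        rw [Finset.prod_insert hx]
        have : w * (h a * ∏ t ∈ Tp, h t) = h a * (w * ∏ t ∈ Tp, h t) := by ring
        rw [this]
        exact hmul _ (hhV a (hmem a (mem_insert_self a Tp)))
          _ (ih (fun t ht => hmem t (mem_insert_of_mem ht)))
  set T : Finset S := univ.filter (fun t => ¬ (∀ f ∈ V, f s = f t)) with hT
  set H : S → ℝ := w * ∏ t ∈ T, h t with hH
  have hHV : H ∈ V := prodmem T (fun t ht => (mem_filter.1 ht).2)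
  have hHs : H s ≠ 0 := by
    rw [hH]
    simp only [Pi.mul_apply, Finset.prod_apply]
    exact mul_ne_zero hws (Finset.prod_ne_zero_iff.2
      (fun t ht => hhs t (mem_filter.1 ht).2))
  have hH0 : ∀ u, ¬ (∀ f ∈ V, f s = f u) → H u = 0 := by
    intro u hu
    rw [hH]
    simp only [Pi.mul_apply, Finset.prod_apply]
    have : u ∈ T := mem_filter.2 ⟨mem_univ u, hu⟩
    exact mul_eq_zero_of_right _ (Finset.prod_eq_zero this (hht u hu))
  have hHe : ∀ u, (∀ f ∈ V, f s = f u) → H u = H s := by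
    intro u hu
    exact (hu H hHV).symm
  have : (fun u => if (∀ f ∈ V, f s = f u) then (1:ℝ) else 0) = (H s)⁻¹ • H := by
    funext u
    simp only [Pi.smul_apply, smul_eq_mul]
    by_cases hu : ∀ f ∈ V, f s = f u
    · rw [if_pos hu, hHe u hu, inv_mul_cancel₀ hHs]
    · rw [if_neg hu, hH0 u hu, mul_zero]
  rw [this]
  exact V.smul_mem _ hHV

/-- General lemma: function-space version. -/
lemma fn_version {S : Type*} [Fintype S] (V : Submodule ℝ (S → ℝ))
    (hmul : ∀ f ∈ V, ∀ g ∈ V, f * g ∈ V) :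
    ∃ (d : ℕ) (F : Fin d → (S → ℝ)),
      LinearIndependent ℝ F ∧ Submodule.span ℝ (Set.range F) = V ∧
      (∀ i x, F i x = 0 ∨ F i x = 1) ∧
      (∀ i j, i ≠ j → F i * F j = 0) := by
  classical
  set r : S → S → Prop := fun s t => ∀ f ∈ V, f s = f t with hr
  set e : S → (S → ℝ) := fun s u => if r s u then 1 else 0 with he
  have hrrefl : ∀ s, r s s := fun s f _ => rfl
  have hrsymm : ∀ {s t}, r s t → r t s := fun h f hf => (h f hf).symm
  have hrtrans : ∀ {s t u}, r s t → r t u → r s u :=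
    fun h1 h2 f hf => (h1 f hf).trans (h2 f hf)
  have hre : ∀ s t, r s t → e s = e t := by
    intro s t h
    funext u
    simp only [he]
    by_cases hsu : r s u
    · rw [if_pos hsu, if_pos (hrtrans (hrsymm h) hsu)]
    · rw [if_neg hsu, if_neg (fun htu => hsu (hrtrans h htu))]
  have hen : ∀ s u, e s u ≠ 0 → r s u := by
    intro s u h
    by_contra hc
    simp only [he, if_neg hc] at h
    exact h rfl
  have hes : ∀ s, e s s = 1 := by
    intro s; simp only [he, if_pos (hrrefl s)]
  have het : ∀ s u, r s u → e s u = 1 := by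
    intro s u h; simp only [he, if_pos h]
  set sd : Setoid S := ⟨r, hrrefl, fun h => hrsymm h, fun h1 h2 => hrtrans h1 h2⟩
    with hsd
  set rep : S → S := fun s => (Quotient.mk sd s).out with hrep
  have hrrep : ∀ s, r s (rep s) := by
    intro s
    exact hrsymm (Quotient.exact ((Quotient.mk sd s).out_eq))
  have hrepeq : ∀ s t, r s t → rep s = rep t := by
    intro s t h
    simp only [hrep, Quotient.sound (a := s) (b := t) h]
  set live : S → Prop := fun s => ∃ w ∈ V, w s ≠ 0 with hlv
  have hliver : ∀ {s t}, live s → r s t → live t := by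
    rintro s t ⟨w, hw, hws⟩ h
    exact ⟨w, hw, by rw [← h w hw]; exact hws⟩
  have hmem_e : ∀ s, live s → e s ∈ V := fun s hs => indicator_mem V hmul s hs
  set E : Finset (S → ℝ) := (univ.filter live).image e with hE
  set R : Finset S := univ.filter (fun s => live s ∧ rep s = s) with hR
  -- decomposition of any element of V
  have hdecomp : ∀ f ∈ V, f = ∑ s ∈ R, f s • e s := by
    intro f hf
    funext u
    rw [Finset.sum_apply]
    by_cases hu : live u
    · have hzero : ∀ s ∈ R, s ≠ rep u → (f s • e s) u = 0 := by
        intro s hs hne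
        simp only [hR, mem_filter] at hs
        simp only [Pi.smul_apply, smul_eq_mul]
        by_cases hz : e s u = 0
        · rw [hz, mul_zero]
        · exact absurd (hs.2.2.symm.trans ((hrepeq s u (hen s u hz)))) hne
      have hmemR : rep u ∈ R := by
        simp only [hR, mem_filter]
        exact ⟨mem_univ _, hliver hu (hrrep u), hrepeq (rep u) u (hrsymm (hrrep u))⟩
      rw [Finset.sum_eq_single_of_mem (rep u) hmemR hzero, Pi.smul_apply,
        smul_eq_mul, het (rep u) u (hrsymm (hrrep u)), mul_one]
      exact ((hrsymm (hrrep u)) f hf).symm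
    · have hfu : f u = 0 := by
        by_contra hc
        exact hu ⟨f, hf, hc⟩
      rw [hfu]
      refine (Finset.sum_eq_zero ?_).symm
      intro s hs
      simp only [hR, mem_filter] at hs
      simp only [Pi.smul_apply, smul_eq_mul]
      by_cases hz : e s u = 0
      · rw [hz, mul_zero]
      · exact absurd (hliver hs.2.1 (hen s u hz)) hu
  set d : ℕ := E.card with hd
  set F : Fin d → (S → ℝ) := fun i => (E.equivFin.symm i : S → ℝ) with hF
  have hFinj : Function.Injective F :=
    Subtype.val_injective.comp E.equivFin.symm.injective
  have hFmem : ∀ i, F i ∈ E := fun i => (E.equivFin.symm i).2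
  have hFex : ∀ i : Fin d, ∃ s, live s ∧ F i = e s := by
    intro i
    have := hFmem i
    simp only [hE, mem_image, mem_filter] at this
    obtain ⟨s, ⟨_, hs⟩, hse⟩ := this
    exact ⟨s, hs, hse.symm⟩
  choose pt hptlive hpte using hFex
  have hFdisj : ∀ i j, i ≠ j → ∀ u, F i u * F j u = 0 := by
    intro i j hij u
    by_cases hi : F i u = 0
    · rw [hi, zero_mul]
    by_cases hj : F j u = 0
    · rw [hj, mul_zero]
    exfalso
    rw [hpte i] at hi
    rw [hpte j] at hj
    have : r (pt i) (pt j) := hrtrans (hen _ _ hi) (hrsymm (hen _ _ hj))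
    exact hij (hFinj (by rw [hpte i, hpte j, hre _ _ this]))
  refine ⟨d, F, ?_, ?_, ?_, ?_⟩
  · rw [linearIndependent_iff']
    intro t g hsum i hit
    have := congrFun hsum (pt i)
    rw [Finset.sum_apply] at this
    rw [Finset.sum_eq_single i (fun j hj hne => ?_) (fun h => absurd hit h)] at this
    · simpa [hpte i, hes (pt i)] using this
    · simp only [Pi.smul_apply, smul_eq_mul]
      have h0 : F j (pt i) * F i (pt i) = 0 := hFdisj j i hne _
      rw [hpte i, hes (pt i), mul_one] at h0
      rw [h0, mul_zero]
  · have hrange : Set.range F = ↑E := by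
      have : Set.range F = Set.range (Subtype.val : E → (S → ℝ)) :=
        E.equivFin.symm.surjective.range_comp _
      rw [this]
      ext g
      simp
    rw [hrange]
    apply le_antisymm
    · rw [Submodule.span_le]
      intro g hg
      simp only [Finset.coe_image, Set.mem_image, Finset.coe_filter, Set.mem_setOf_eq,
        hE] at hg
      obtain ⟨s, ⟨_, hs⟩, hge⟩ := hg
      exact hge ▸ hmem_e s hs
    · intro f hf
      rw [hdecomp f hf]
      apply Submodule.sum_mem
      intro s hs
      simp only [hR, mem_filter] at hs
      apply Submodule.smul_mem
      apply Submodule.subset_span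
      simp only [hE, Finset.coe_image, Set.mem_image, Finset.coe_filter, Set.mem_setOf_eq]
      exact ⟨s, ⟨mem_univ _, hs.2.1⟩, rfl⟩
  · intro i x
    rw [hpte i]
    simp only [he]
    by_cases h : r (pt i) x
    · right; rw [if_pos h]
    · left; rw [if_neg h]
  · intro i j hij
    funext u
    exact hFdisj i j hij u

theorem stmt_1 {n : ℕ} (V : Submodule ℝ (Matrix (Fin n) (Fin n) ℝ))
    (hsymm : ∀ M ∈ V, M.IsSymm)
    (hhad : ∀ M ∈ V, ∀ N ∈ V, Matrix.hadamard M N ∈ V) :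
    ∃ (d : ℕ) (F : Fin d → Matrix (Fin n) (Fin n) ℝ),
      LinearIndependent ℝ F ∧
      Submodule.span ℝ (Set.range F) = V ∧
      (∀ i x y, F i x y = 0 ∨ F i x y = 1) ∧
      (∀ i j, i ≠ j → Matrix.hadamard (F i) (F j) = 0) := by
  classical
  let eqv : Matrix (Fin n) (Fin n) ℝ ≃ₗ[ℝ] (Fin n × Fin n → ℝ) :=
    { toFun := fun M p => M p.1 p.2
      map_add' := fun M N => rfl
      map_smul' := fun c M => rfl
      invFun := fun f => Matrix.of fun x y => f (x, y)
      left_inv := fun M => rfl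
      right_inv := fun f => rfl }
  set V' : Submodule ℝ (Fin n × Fin n → ℝ) := V.map eqv.toLinearMap with hV'
  have hmul' : ∀ f ∈ V', ∀ g ∈ V', f * g ∈ V' := by
    intro f hf g hg
    obtain ⟨M, hM, rfl⟩ := Submodule.mem_map.1 hf
    obtain ⟨N, hN, rfl⟩ := Submodule.mem_map.1 hg
    exact Submodule.mem_map.2 ⟨Matrix.hadamard M N, hhad M hM N hN, by
      funext p
      simp [Matrix.hadamard_apply, eqv]; rfl⟩
  obtain ⟨d, G, hli, hspan, h01, hdisj⟩ := fn_version V' hmul'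
  refine ⟨d, fun i => eqv.symm (G i), ?_, ?_, ?_, ?_⟩
  · exact hli.map' eqv.symm.toLinearMap eqv.symm.ker
  · have h1 : Set.range (fun i => eqv.symm (G i)) = eqv.symm '' Set.range G := by
      rw [← Set.range_comp]; rfl
    rw [h1, show ⇑eqv.symm = ⇑eqv.symm.toLinearMap from rfl, ← Submodule.map_span, hspan, hV']
    ext M
    simp only [Submodule.mem_map]
    constructor
    · rintro ⟨f, ⟨N, hN, rfl⟩, rfl⟩
      simpa using hN
    · intro hM
      exact ⟨eqv M, ⟨M, hM, rfl⟩, eqv.symm_apply_apply M⟩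
  · intro i x y
    exact h01 i (x, y)
  · intro i j hij
    funext x y
    have := congrFun (hdisj i j hij) (x, y)
    exact this
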